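/- Let ω : (0,∞) → ℝ be twice continuously differentiable and define W on the half-plane {(p,q) ∈ ℝ² : p > 0} by W(p,q) = ω(√(p² + q²))·exp(arctan(q/p)). Then: (i) W satisfies the equation W + q·W_p − p·W_q = 0 at every point of {p > 0}; (ii) if moreover ρ²·(1 + ρ²)·ω''(ρ) + ρ·ω'(ρ) + ω(ρ) = 0 for all ρ > 0, then W satisfies the linear elliptic equation (1 + p²)·W_pp + 2·p·q·W_pq + (1 + q²)·W_qq = 0 at every point of {p > 0}. -/

import Mathlib

open Real
set_option maxHeartbeats 2000000

private lemma aux_s_pos {p : ℝ} (hp : 0 < p) (q : ℝ) : 0 < p ^ 2 + q ^ 2 :=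
  add_pos_of_pos_of_nonneg (pow_pos hp 2) (sq_nonneg q)

private lemma aux_rho_pos {p : ℝ} (hp : 0 < p) (q : ℝ) : 0 < Real.sqrt (p ^ 2 + q ^ 2) :=
  Real.sqrt_pos.mpr (aux_s_pos hp q)

private lemma aux_rho_sq {p : ℝ} (hp : 0 < p) (q : ℝ) :
    Real.sqrt (p ^ 2 + q ^ 2) ^ 2 = p ^ 2 + q ^ 2 :=
  Real.sq_sqrt (aux_s_pos hp q).le

private lemma hasDerivAt_rho_p {p : ℝ} (q : ℝ) (hp : 0 < p) :
    HasDerivAt (fun s => Real.sqrt (s ^ 2 + q ^ 2)) (p / Real.sqrt (p ^ 2 + q ^ 2)) p := by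
  have h1 : HasDerivAt (fun s : ℝ => s ^ 2 + q ^ 2) (2 * p) p := by
    simpa using (hasDerivAt_pow 2 p).add_const (q ^ 2)
  have h2 := (Real.hasDerivAt_sqrt (aux_s_pos hp q).ne').comp p h1
  refine h2.congr_deriv (Eq.symm ?_)
  have := (aux_rho_pos hp q).ne'
  field_simp

private lemma hasDerivAt_rho_q {p : ℝ} (q : ℝ) (hp : 0 < p) :
    HasDerivAt (fun t => Real.sqrt (p ^ 2 + t ^ 2)) (q / Real.sqrt (p ^ 2 + q ^ 2)) q := by
  have h1 : HasDerivAt (fun t : ℝ => p ^ 2 + t ^ 2) (2 * q) q := by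
    simpa using (hasDerivAt_pow 2 q).const_add (p ^ 2)
  have h2 := (Real.hasDerivAt_sqrt (aux_s_pos hp q).ne').comp q h1
  refine h2.congr_deriv (Eq.symm ?_)
  have := (aux_rho_pos hp q).ne'
  field_simp

private lemma hasDerivAt_theta_p {p : ℝ} (q : ℝ) (hp : 0 < p) :
    HasDerivAt (fun s => Real.exp (Real.arctan (q / s)))
      (Real.exp (Real.arctan (q / p)) * (-q / (p ^ 2 + q ^ 2))) p := by
  have h1 : HasDerivAt (fun s : ℝ => q / s) (-q / p ^ 2) p := by
    simp only [div_eq_mul_inv]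
    refine ((hasDerivAt_inv hp.ne').const_mul q).congr_deriv (Eq.symm ?_)
    ring
  have h2 := ((Real.hasDerivAt_arctan (q / p)).comp p h1).exp
  refine h2.congr_deriv (Eq.symm ?_)
  have h3 : (0:ℝ) < 1 + (q / p) ^ 2 := by positivity
  rw [Function.comp_apply]
  field_simp

private lemma hasDerivAt_theta_q {p : ℝ} (q : ℝ) (hp : 0 < p) :
    HasDerivAt (fun t => Real.exp (Real.arctan (t / p)))
      (Real.exp (Real.arctan (q / p)) * (p / (p ^ 2 + q ^ 2))) q := by
  have h1 : HasDerivAt (fun t : ℝ => t / p) (1 / p) q := by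
    simpa using (hasDerivAt_id q).div_const p
  have h2 := ((Real.hasDerivAt_arctan (q / p)).comp q h1).exp
  refine h2.congr_deriv (Eq.symm ?_)
  have h3 : (0:ℝ) < 1 + (q / p) ^ 2 := by positivity
  rw [Function.comp_apply]
  field_simp

theorem legendre_separated_solution
    (ω : ℝ → ℝ) (hω : ContDiffOn ℝ 2 ω (Set.Ioi 0))
    (W : ℝ → ℝ → ℝ)
    (hW : ∀ p q : ℝ, W p q =
      ω (Real.sqrt (p ^ 2 + q ^ 2)) * Real.exp (Real.arctan (q / p)))
    (Wp Wq : ℝ → ℝ → ℝ)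
    (hWp : ∀ p q : ℝ, Wp p q = deriv (fun s => W s q) p)
    (hWq : ∀ p q : ℝ, Wq p q = deriv (fun s => W p s) q) :
    (∀ p q : ℝ, 0 < p → W p q + q * Wp p q - p * Wq p q = 0) ∧
    ((∀ ρ : ℝ, 0 < ρ →
        ρ ^ 2 * (1 + ρ ^ 2) * deriv (deriv ω) ρ + ρ * deriv ω ρ + ω ρ = 0) →
      ∀ p q : ℝ, 0 < p →
        (1 + p ^ 2) * deriv (fun s => Wp s q) p
          + 2 * p * q * deriv (fun s => Wp p s) q
          + (1 + q ^ 2) * deriv (fun s => Wq p s) q = 0) := by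
  -- differentiability of ω and deriv ω on Ioi 0
  have hω1 : ∀ x : ℝ, 0 < x → HasDerivAt ω (deriv ω x) x := by
    intro x hx
    exact ((hω.contDiffAt (isOpen_Ioi.mem_nhds hx)).differentiableAt
      (by norm_num)).hasDerivAt
  have hωd : ContDiffOn ℝ 1 (deriv ω) (Set.Ioi 0) :=
    hω.deriv_of_isOpen isOpen_Ioi (by norm_num)
  have hω2 : ∀ x : ℝ, 0 < x → HasDerivAt (deriv ω) (deriv (deriv ω) x) x := by
    intro x hx
    exact ((hωd.contDiffAt (isOpen_Ioi.mem_nhds hx)).differentiableAt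
      (by norm_num)).hasDerivAt
  -- first derivatives : HasDerivAt statements for W
  have hWdp : ∀ p q : ℝ, 0 < p →
      HasDerivAt (fun s => W s q)
        ((deriv ω (Real.sqrt (p ^ 2 + q ^ 2)) * (p / Real.sqrt (p ^ 2 + q ^ 2))
          - ω (Real.sqrt (p ^ 2 + q ^ 2)) * (q / (p ^ 2 + q ^ 2)))
          * Real.exp (Real.arctan (q / p))) p := by
    intro p q hp
    have hfun : (fun s => W s q)
        = fun s => ω (Real.sqrt (s ^ 2 + q ^ 2)) * Real.exp (Real.arctan (q / s)) :=
      funext fun s => hW s q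
    rw [hfun]
    have h := ((hω1 _ (aux_rho_pos hp q)).comp p (hasDerivAt_rho_p q hp)).mul
      (hasDerivAt_theta_p q hp)
    refine h.congr_deriv (Eq.symm ?_)
    simp only [Function.comp_apply]
    ring
  have hWdq : ∀ p q : ℝ, 0 < p →
      HasDerivAt (fun t => W p t)
        ((deriv ω (Real.sqrt (p ^ 2 + q ^ 2)) * (q / Real.sqrt (p ^ 2 + q ^ 2))
          + ω (Real.sqrt (p ^ 2 + q ^ 2)) * (p / (p ^ 2 + q ^ 2)))
          * Real.exp (Real.arctan (q / p))) q := by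
    intro p q hp
    have hfun : (fun t => W p t)
        = fun t => ω (Real.sqrt (p ^ 2 + t ^ 2)) * Real.exp (Real.arctan (t / p)) :=
      funext fun t => hW p t
    rw [hfun]
    have h := ((hω1 _ (aux_rho_pos hp q)).comp q (hasDerivAt_rho_q q hp)).mul
      (hasDerivAt_theta_q q hp)
    refine h.congr_deriv (Eq.symm ?_)
    simp only [Function.comp_apply]
    ring
  have hWp_eq : ∀ p q : ℝ, 0 < p → Wp p q =
      (deriv ω (Real.sqrt (p ^ 2 + q ^ 2)) * (p / Real.sqrt (p ^ 2 + q ^ 2))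
        - ω (Real.sqrt (p ^ 2 + q ^ 2)) * (q / (p ^ 2 + q ^ 2)))
        * Real.exp (Real.arctan (q / p)) := by
    intro p q hp; rw [hWp]; exact (hWdp p q hp).deriv
  have hWq_eq : ∀ p q : ℝ, 0 < p → Wq p q =
      (deriv ω (Real.sqrt (p ^ 2 + q ^ 2)) * (q / Real.sqrt (p ^ 2 + q ^ 2))
        + ω (Real.sqrt (p ^ 2 + q ^ 2)) * (p / (p ^ 2 + q ^ 2)))
        * Real.exp (Real.arctan (q / p)) := by
    intro p q hp; rw [hWq]; exact (hWdq p q hp).deriv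
  constructor
  · -- part (i)
    intro p q hp
    rw [hW, hWp_eq p q hp, hWq_eq p q hp]
    have h2 := aux_rho_sq hp q
    have hρ := (aux_rho_pos hp q).ne'
    have hs := (aux_s_pos hp q).ne'
    set r := Real.sqrt (p ^ 2 + q ^ 2)
    field_simp
    ring
  · -- part (ii)
    intro hODE p q hp
    have h2 := aux_rho_sq hp q
    have hρpos := aux_rho_pos hp q
    have hρ := hρpos.ne'
    have hspos := aux_s_pos hp q
    have hs := hspos.ne'
    set r := Real.sqrt (p ^ 2 + q ^ 2) with hrdef
    have hode := hODE r hρpos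
    have hsqp : HasDerivAt (fun s : ℝ => s ^ 2 + q ^ 2) (2 * p) p := by
      simpa using (hasDerivAt_pow 2 p).add_const (q ^ 2)
    have hsqq : HasDerivAt (fun t : ℝ => p ^ 2 + t ^ 2) (2 * q) q := by
      simpa using (hasDerivAt_pow 2 q).const_add (p ^ 2)
    have hP : HasDerivAt
        (fun s => (deriv ω (Real.sqrt (s ^ 2 + q ^ 2)) * (s / Real.sqrt (s ^ 2 + q ^ 2))
          - ω (Real.sqrt (s ^ 2 + q ^ 2)) * (q / (s ^ 2 + q ^ 2)))
          * Real.exp (Real.arctan (q / s)))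
        ((deriv (deriv ω) r * p ^ 2 / r ^ 2
          + deriv ω r * (q ^ 2 - 2 * p * q) / r ^ 3
          + ω r * (q ^ 2 + 2 * p * q) / r ^ 4)
          * Real.exp (Real.arctan (q / p))) p := by
      have hA := (hω2 r hρpos).comp p (hasDerivAt_rho_p q hp)
      have hB := (hasDerivAt_id p).div (hasDerivAt_rho_p q hp) hρ
      have hC := (hω1 r hρpos).comp p (hasDerivAt_rho_p q hp)
      have hD := (hasDerivAt_const p q).div hsqp hs
      have h := ((hA.mul hB).sub (hC.mul hD)).mul (hasDerivAt_theta_p q hp)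
      refine h.congr_deriv (Eq.symm ?_)
      simp only [Function.comp_apply, id_eq, Pi.mul_apply, Pi.div_apply, Pi.sub_apply, Pi.add_apply]
      rw [← hrdef]
      rw [← h2]
      field_simp
      linear_combination (-(deriv ω r * r)) * h2
    have hPq : HasDerivAt
        (fun t => (deriv ω (Real.sqrt (p ^ 2 + t ^ 2)) * (p / Real.sqrt (p ^ 2 + t ^ 2))
          - ω (Real.sqrt (p ^ 2 + t ^ 2)) * (t / (p ^ 2 + t ^ 2)))
          * Real.exp (Real.arctan (t / p)))
        ((deriv (deriv ω) r * (p * q) / r ^ 2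
          + deriv ω r * (p ^ 2 - q ^ 2 - p * q) / r ^ 3
          + ω r * (q ^ 2 - p ^ 2 - p * q) / r ^ 4)
          * Real.exp (Real.arctan (q / p))) q := by
      have hA := (hω2 r hρpos).comp q (hasDerivAt_rho_q q hp)
      have hB := (hasDerivAt_const q p).div (hasDerivAt_rho_q q hp) hρ
      have hC := (hω1 r hρpos).comp q (hasDerivAt_rho_q q hp)
      have hD := (hasDerivAt_id q).div hsqq hs
      have h := ((hA.mul hB).sub (hC.mul hD)).mul (hasDerivAt_theta_q q hp)
      refine h.congr_deriv (Eq.symm ?_)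
      simp only [Function.comp_apply, id_eq, Pi.mul_apply, Pi.div_apply, Pi.sub_apply, Pi.add_apply]
      rw [← hrdef]
      rw [← h2]
      field_simp
      linear_combination (ω r) * h2
    have hQq : HasDerivAt
        (fun t => (deriv ω (Real.sqrt (p ^ 2 + t ^ 2)) * (t / Real.sqrt (p ^ 2 + t ^ 2))
          + ω (Real.sqrt (p ^ 2 + t ^ 2)) * (p / (p ^ 2 + t ^ 2)))
          * Real.exp (Real.arctan (t / p)))
        ((deriv (deriv ω) r * q ^ 2 / r ^ 2
          + deriv ω r * (p ^ 2 + 2 * p * q) / r ^ 3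
          + ω r * (p ^ 2 - 2 * p * q) / r ^ 4)
          * Real.exp (Real.arctan (q / p))) q := by
      have hA := (hω2 r hρpos).comp q (hasDerivAt_rho_q q hp)
      have hB := (hasDerivAt_id q).div (hasDerivAt_rho_q q hp) hρ
      have hC := (hω1 r hρpos).comp q (hasDerivAt_rho_q q hp)
      have hD := (hasDerivAt_const q p).div hsqq hs
      have h := ((hA.mul hB).add (hC.mul hD)).mul (hasDerivAt_theta_q q hp)
      refine h.congr_deriv (Eq.symm ?_)
      simp only [Function.comp_apply, id_eq, Pi.mul_apply, Pi.div_apply, Pi.sub_apply, Pi.add_apply]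
      rw [← hrdef]
      rw [← h2]
      field_simp
      linear_combination (-(deriv ω r * r)) * h2
    have hDpp : deriv (fun s => Wp s q) p
        = (deriv (deriv ω) r * p ^ 2 / r ^ 2
          + deriv ω r * (q ^ 2 - 2 * p * q) / r ^ 3
          + ω r * (q ^ 2 + 2 * p * q) / r ^ 4)
          * Real.exp (Real.arctan (q / p)) := by
      have hev : (fun s => Wp s q) =ᶠ[nhds p]
          (fun s => (deriv ω (Real.sqrt (s ^ 2 + q ^ 2)) * (s / Real.sqrt (s ^ 2 + q ^ 2))
            - ω (Real.sqrt (s ^ 2 + q ^ 2)) * (q / (s ^ 2 + q ^ 2)))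
            * Real.exp (Real.arctan (q / s))) := by
        filter_upwards [isOpen_Ioi.mem_nhds hp] with t ht
        exact hWp_eq t q ht
      rw [hev.deriv_eq]
      exact hP.deriv
    have hDpq : deriv (fun t => Wp p t) q
        = (deriv (deriv ω) r * (p * q) / r ^ 2
          + deriv ω r * (p ^ 2 - q ^ 2 - p * q) / r ^ 3
          + ω r * (q ^ 2 - p ^ 2 - p * q) / r ^ 4)
          * Real.exp (Real.arctan (q / p)) := by
      have hev : (fun t => Wp p t)
          = (fun t => (deriv ω (Real.sqrt (p ^ 2 + t ^ 2)) * (p / Real.sqrt (p ^ 2 + t ^ 2))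
            - ω (Real.sqrt (p ^ 2 + t ^ 2)) * (t / (p ^ 2 + t ^ 2)))
            * Real.exp (Real.arctan (t / p))) :=
        funext fun t => hWp_eq p t hp
      rw [hev]
      exact hPq.deriv
    have hDqq : deriv (fun t => Wq p t) q
        = (deriv (deriv ω) r * q ^ 2 / r ^ 2
          + deriv ω r * (p ^ 2 + 2 * p * q) / r ^ 3
          + ω r * (p ^ 2 - 2 * p * q) / r ^ 4)
          * Real.exp (Real.arctan (q / p)) := by
      have hev : (fun t => Wq p t)
          = (fun t => (deriv ω (Real.sqrt (p ^ 2 + t ^ 2)) * (t / Real.sqrt (p ^ 2 + t ^ 2))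
            + ω (Real.sqrt (p ^ 2 + t ^ 2)) * (p / (p ^ 2 + t ^ 2)))
            * Real.exp (Real.arctan (t / p))) :=
        funext fun t => hWq_eq p t hp
      rw [hev]
      exact hQq.deriv
    rw [hDpp, hDpq, hDqq]
    field_simp
    linear_combination (Real.exp (Real.arctan (q / p)) * (p ^ 2 + q ^ 2)) * hode
      - (Real.exp (Real.arctan (q / p)) * deriv (deriv ω) r * r ^ 2 * (p ^ 2 + q ^ 2)) * h2
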